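/- arXiv:2207.04990 — 2 statements merged into one kernel-verified Lean document; each statement's English description precedes it below -/
import Mathlib

section
/- Let m and n be integers, each at least 3. Then in LCTR, the rectangular partition (nᵐ) (m parts all equal to n) satisfies SG((nᵐ)) = 0 if m + n is even, and SG((nᵐ)) = 1 if m + n is odd. -/
/-- Remove the left column of a Young diagram: subtract 1 from each part and
omit nonpositive values. -/
def leftCol (l : List ℕ) : List ℕ := (l.map (· - 1)).filter (0 < ·)

/-- Remove the top row of a Young diagram. -/
def topRow (l : List ℕ) : List ℕ := l.tail

/-- Minimum excluded value of a set of naturals. -/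
noncomputable def mex (s : Set ℕ) : ℕ := sInf {n | n ∉ s}

def wt (l : List ℕ) : ℕ := l.sum + l.length

lemma wt_leftCol_le (l : List ℕ) : wt (leftCol l) ≤ l.sum := by
  induction l with
  | nil => simp [leftCol, wt]
  | cons a t ih =>
    simp only [leftCol, wt] at ih ⊢
    rw [List.map_cons, List.filter_cons]
    by_cases h : 0 < a - 1
    · simp only [h, decide_true, if_true, List.sum_cons, List.length_cons]
      omega
    · simp only [h, decide_false, Bool.false_eq_true, if_false, List.sum_cons]
      omega

lemma wt_leftCol_lt (l : List ℕ) (h : l ≠ []) : wt (leftCol l) < wt l := by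
  have h1 := wt_leftCol_le l
  have h2 : 0 < l.length := List.length_pos_iff.mpr h
  unfold wt at *
  omega

lemma wt_topRow_lt (l : List ℕ) (h : l ≠ []) : wt (topRow l) < wt l := by
  cases l with
  | nil => exact absurd rfl h
  | cons a t => simp [topRow, wt]; omega

/-- The Sprague–Grundy value of a position in the LCTR game. -/
noncomputable def SG (l : List ℕ) : ℕ :=
  if h : l = [] then 0
  else mex {SG (leftCol l), SG (topRow l)}
termination_by wt l
decreasing_by
  · exact wt_leftCol_lt l h
  · exact wt_topRow_lt l h

/-- A partition: a non-increasing list of positive integers. -/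
def IsPartition (l : List ℕ) : Prop := l.Pairwise (· ≥ ·) ∧ ∀ x ∈ l, 0 < x

/-- The conjugate partition: the `j`-th part (for `1 ≤ j ≤ l₁`) is the number
of parts of `l` that are at least `j`. -/
def conj (l : List ℕ) : List ℕ :=
  (List.range (l.headD 0)).map (fun j => l.countP (fun x => decide (j < x)))

lemma SG_def (l : List ℕ) : SG l = if l = [] then 0 else mex {SG (leftCol l), SG (topRow l)} := by
  rw [SG]
  split <;> rfl

lemma mex_eq {s : Set ℕ} {k : ℕ} (h1 : k ∉ s) (h2 : ∀ j < k, j ∈ s) : mex s = k := by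
  have hne : {n | n ∉ s}.Nonempty := ⟨k, h1⟩
  have hm := Nat.sInf_mem hne
  have hle : mex s ≤ k := Nat.sInf_le h1
  rcases lt_or_eq_of_le hle with h | h
  · exact absurd (h2 _ h) hm
  · exact h

lemma mex00 : mex ({0, 0} : Set ℕ) = 1 := mex_eq (by simp) (by intro j hj; interval_cases j; simp)
lemma mex11 : mex ({1, 1} : Set ℕ) = 0 := mex_eq (by simp) (by omega)
lemma mex22 : mex ({2, 2} : Set ℕ) = 0 := mex_eq (by simp) (by omega)
lemma mex01 : mex ({0, 1} : Set ℕ) = 2 := mex_eq (by simp) (by intro j hj; interval_cases j <;> simp)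
lemma mex02 : mex ({0, 2} : Set ℕ) = 1 := mex_eq (by simp) (by intro j hj; interval_cases j; simp)
lemma mex10 : mex ({1, 0} : Set ℕ) = 2 := mex_eq (by simp) (by intro j hj; interval_cases j <;> simp)
lemma mex20 : mex ({2, 0} : Set ℕ) = 1 := mex_eq (by simp) (by intro j hj; interval_cases j; simp)
lemma mex12 : mex ({1, 2} : Set ℕ) = 0 := mex_eq (by simp) (by omega)
lemma mex21 : mex ({2, 1} : Set ℕ) = 0 := mex_eq (by simp) (by omega)

lemma SG_nil : SG [] = 0 := by rw [SG_def]; simp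

lemma leftCol_rep_one (m : ℕ) : leftCol (List.replicate m 1) = [] := by
  simp [leftCol]

lemma leftCol_rep (m n : ℕ) (h : 2 ≤ n) : leftCol (List.replicate m n) = List.replicate m (n - 1) := by
  have h1 : 0 < n - 1 := by omega
  simp only [leftCol, List.map_replicate]
  induction m with
  | zero => simp
  | succ m ih => simp [List.replicate_succ, List.filter_cons, h1, ih]

lemma topRow_rep (m n : ℕ) : topRow (List.replicate (m + 1) n) = List.replicate m n := by
  simp [topRow, List.replicate_succ]

lemma SG_rep_step (m n : ℕ) (hm : 1 ≤ m) (hn : 2 ≤ n) :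
    SG (List.replicate m n) =
      mex {SG (List.replicate m (n - 1)), SG (List.replicate (m - 1) n)} := by
  obtain ⟨m, rfl⟩ : ∃ k, m = k + 1 := ⟨m - 1, by omega⟩
  rw [SG_def]
  have : List.replicate (m + 1) n ≠ [] := by simp
  rw [if_neg this, leftCol_rep _ _ hn, topRow_rep]
  simp

lemma SG_rep_one (m : ℕ) (hm : 1 ≤ m) :
    SG (List.replicate m 1) = mex {0, SG (List.replicate (m - 1) 1)} := by
  obtain ⟨m, rfl⟩ : ∃ k, m = k + 1 := ⟨m - 1, by omega⟩
  rw [SG_def]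
  have : List.replicate (m + 1) 1 ≠ [] := by simp
  rw [if_neg this, leftCol_rep_one, topRow_rep, SG_nil]
  simp

/-- column of 1s : g(m,1) -/
lemma g_col1 : ∀ m : ℕ, (m % 2 = 1 → SG (List.replicate m 1) = 1) ∧
    (2 ≤ m → m % 2 = 0 → SG (List.replicate m 1) = 2) := by
  intro m
  induction m with
  | zero => exact ⟨by omega, by omega⟩
  | succ m ih =>
    rw [SG_rep_one (m + 1) (by omega)]
    simp only [Nat.add_sub_cancel]
    rcases Nat.eq_zero_or_pos m with rfl | hm
    · rw [show SG (List.replicate 0 1) = 0 from SG_nil, mex00]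
      exact ⟨fun _ => rfl, by omega⟩
    · rcases Nat.mod_two_eq_zero_or_one m with he | ho
      · rw [ih.2 (by omega) (by omega), mex02]
        constructor
        · intro _; rfl
        · intro _ h; omega
      · rw [ih.1 (by omega), mex01]
        constructor
        · intro h; omega
        · intro _ _; rfl

/-- row of one part : g(1,n), i.e. SG [n] = SG (replicate 1 n) -/
lemma g_row1 : ∀ n : ℕ, (n % 2 = 1 → SG (List.replicate 1 n) = 1) ∧
    (2 ≤ n → n % 2 = 0 → SG (List.replicate 1 n) = 2) := by
  intro n
  induction n with
  | zero => exact ⟨by omega, by omega⟩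
  | succ n ih =>
    rcases Nat.lt_or_ge n 1 with h1 | h1
    · interval_cases n
      rw [SG_rep_one 1 le_rfl]
      simp only [Nat.sub_self]
      rw [show SG (List.replicate 0 1) = 0 from SG_nil, mex00]
      exact ⟨fun _ => rfl, by omega⟩
    · rw [SG_rep_step 1 (n + 1) le_rfl (by omega)]
      simp only [Nat.add_sub_cancel, Nat.sub_self]
      rw [show SG (List.replicate 0 (n+1)) = 0 from SG_nil]
      rcases Nat.mod_two_eq_zero_or_one n with he | ho
      · rw [ih.2 (by omega) (by omega), mex20]
        exact ⟨fun _ => rfl, by omega⟩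
      · rw [ih.1 (by omega), mex10]
        exact ⟨by omega, fun _ _ => rfl⟩

/-- g(2,n) for n ≥ 2 -/
lemma g_2n : ∀ n : ℕ, 2 ≤ n → (n % 2 = 0 → SG (List.replicate 2 n) = 0) ∧
    (n % 2 = 1 → SG (List.replicate 2 n) = 2) := by
  intro n
  induction n with
  | zero => omega
  | succ n ih =>
    intro hn
    rw [SG_rep_step 2 (n + 1) (by omega) (by omega)]
    simp only [Nat.add_sub_cancel, show (2:ℕ) - 1 = 1 from rfl]
    rcases Nat.lt_or_ge n 2 with h1 | h1
    · interval_cases n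
      · omega
      · -- n+1 = 2 : mex {SG (rep 2 1), SG (rep 1 2)}
        rw [(g_col1 2).2 le_rfl rfl, (g_row1 2).2 le_rfl rfl, mex22]
        exact ⟨fun _ => rfl, by omega⟩
    · rcases Nat.mod_two_eq_zero_or_one n with he | ho
      · -- n even ≥ 2, so n+1 odd: mex {g(2,n)=0, g(1,n+1)=1}
        rw [(ih h1).1 (by omega), (g_row1 (n+1)).1 (by omega), mex01]
        exact ⟨by omega, fun _ => rfl⟩
      · -- n odd, n+1 even: mex {g(2,n)=2, g(1,n+1)=2}
        rw [(ih h1).2 (by omega), (g_row1 (n+1)).2 (by omega) (by omega), mex22]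
        exact ⟨fun _ => rfl, by omega⟩

/-- g(m,2) for m ≥ 2 -/
lemma g_m2 : ∀ m : ℕ, 2 ≤ m → (m % 2 = 0 → SG (List.replicate m 2) = 0) ∧
    (m % 2 = 1 → SG (List.replicate m 2) = 2) := by
  intro m
  induction m with
  | zero => omega
  | succ m ih =>
    intro hm
    rw [SG_rep_step (m + 1) 2 (by omega) le_rfl]
    simp only [Nat.add_sub_cancel, show (2:ℕ) - 1 = 1 from rfl]
    rcases Nat.lt_or_ge m 2 with h1 | h1
    · interval_cases m
      · omega
      · rw [(g_col1 2).2 le_rfl rfl, (g_row1 2).2 le_rfl rfl, mex22]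
        exact ⟨fun _ => rfl, by omega⟩
    · rcases Nat.mod_two_eq_zero_or_one m with he | ho
      · rw [(g_col1 (m+1)).1 (by omega), (ih h1).1 (by omega), mex10]
        exact ⟨by omega, fun _ => rfl⟩
      · rw [(g_col1 (m+1)).2 (by omega) (by omega), (ih h1).2 (by omega), mex22]
        exact ⟨fun _ => rfl, by omega⟩

lemma g_main : ∀ s m n : ℕ, m + n ≤ s → 3 ≤ m → 3 ≤ n →
    ((m + n) % 2 = 0 → SG (List.replicate m n) = 0) ∧
    ((m + n) % 2 = 1 → SG (List.replicate m n) = 1) := by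
  intro s
  induction s with
  | zero => intro m n h; omega
  | succ s ih =>
    intro m n hs hm hn
    rw [SG_rep_step m n (by omega) (by omega)]
    rcases Nat.lt_or_ge m 4 with hm4 | hm4
    · rcases Nat.lt_or_ge n 4 with hn4 | hn4
      · -- m = n = 3
        interval_cases m; interval_cases n
        rw [show (3:ℕ) - 1 = 2 from rfl, (g_m2 3 (by omega)).2 rfl, (g_2n 3 (by omega)).2 rfl, mex22]
        exact ⟨fun _ => rfl, by omega⟩
      · -- m = 3, n ≥ 4
        interval_cases m
        have hrec := ih 3 (n - 1) (by omega) le_rfl (by omega)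
        have h2n := g_2n n (by omega)
        rw [show (3:ℕ) - 1 = 2 from rfl]
        rcases Nat.mod_two_eq_zero_or_one n with he | ho
        · -- n even: g(3,n-1): 3+(n-1) even → 0 ; g(2,n)=0 ; mex{0,0}=1 ; 3+n odd
          rw [hrec.1 (by omega), h2n.1 (by omega), mex00]
          exact ⟨by omega, fun _ => rfl⟩
        · rw [hrec.2 (by omega), h2n.2 (by omega), mex12]
          exact ⟨fun _ => rfl, by omega⟩
    · rcases Nat.lt_or_ge n 4 with hn4 | hn4
      · -- n = 3, m ≥ 4
        interval_cases n
        have hrec := ih (m - 1) 3 (by omega) (by omega) le_rfl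
        have hm2 := g_m2 m (by omega)
        rw [show (3:ℕ) - 1 = 2 from rfl]
        rcases Nat.mod_two_eq_zero_or_one m with he | ho
        · rw [hm2.1 (by omega), hrec.1 (by omega), mex00]
          exact ⟨by omega, fun _ => rfl⟩
        · rw [hm2.2 (by omega), hrec.2 (by omega), mex21]
          exact ⟨fun _ => rfl, by omega⟩
      · -- m, n ≥ 4
        have h1 := ih m (n - 1) (by omega) (by omega) (by omega)
        have h2 := ih (m - 1) n (by omega) (by omega) (by omega)
        rcases Nat.mod_two_eq_zero_or_one (m + n) with he | ho
        · rw [h1.2 (by omega), h2.2 (by omega), mex11]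
          exact ⟨fun _ => rfl, by omega⟩
        · rw [h1.1 (by omega), h2.1 (by omega), mex00]
          exact ⟨by omega, fun _ => rfl⟩

/-- For `m, n ≥ 3`, the rectangle `(nᵐ)` has Sprague–Grundy value 0 if `m + n`
is even and 1 if `m + n` is odd. -/
theorem SG_rectangle (m n : ℕ) (hm : 3 ≤ m) (hn : 3 ≤ n) :
    (Even (m + n) → SG (List.replicate m n) = 0) ∧
    (Odd (m + n) → SG (List.replicate m n) = 1) := by
  have h := g_main (m + n) m n le_rfl hm hn
  exact ⟨fun he => h.1 (Nat.even_iff.mp he), fun ho => h.2 (Nat.odd_iff.mp ho)⟩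
end

section
/- Every quadrated partition λ is a P-position in LCTR; that is, SG(λ) = 0. -/
/-- A quadrated partition: all parts are even and each part occurs an even
number of times. -/
def Quadrated (l : List ℕ) : Prop :=
  IsPartition l ∧ (∀ x ∈ l, Even x) ∧ (∀ x : ℕ, Even (l.count x))


/-! ### Auxiliary material -/

lemma SG_ne_nil (l : List ℕ) (h : l ≠ []) :
    SG l = mex {SG (leftCol l), SG (topRow l)} := by
  rw [SG]; simp [h]

lemma mex_pair_eq_zero {a b : ℕ} (ha : a ≠ 0) (hb : b ≠ 0) :
    mex {a, b} = 0 := by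
  apply Nat.sInf_eq_zero.mpr
  left
  simp [Set.mem_setOf_eq, ha.symm, hb.symm]

lemma mex_ne_zero_of_mem {s : Set ℕ} (h0 : (0 : ℕ) ∈ s) {m : ℕ} (hm : m ∉ s) :
    mex s ≠ 0 := by
  intro h
  have hne : {n | n ∉ s}.Nonempty := ⟨m, hm⟩
  have := Nat.sInf_mem hne
  rw [show sInf {n | n ∉ s} = mex s from rfl, h] at this
  exact this h0

lemma mex_pair_ne_zero_left (b : ℕ) : mex ({0, b} : Set ℕ) ≠ 0 := by
  apply mex_ne_zero_of_mem (by simp) (m := b + 1)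
  simp

lemma mex_pair_ne_zero_right (a : ℕ) : mex ({a, 0} : Set ℕ) ≠ 0 := by
  apply mex_ne_zero_of_mem (by simp) (m := a + 1)
  simp

/-- All parts odd, even multiplicities, sorted. -/
def OE (l : List ℕ) : Prop :=
  l.Pairwise (· ≥ ·) ∧ (∀ x ∈ l, Odd x) ∧ (∀ x : ℕ, Even (l.count x))

lemma leftCol_cons (a : ℕ) (t : List ℕ) :
    leftCol (a :: t) = if 0 < a - 1 then (a - 1) :: leftCol t else leftCol t := by
  simp only [leftCol, List.map_cons, List.filter_cons]
  split <;> rename_i h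
  · simp only [decide_eq_true_eq] at *
    simp [h]
  · simp only [decide_eq_true_eq] at *
    simp [h]

lemma count_leftCol (l : List ℕ) (hpos : ∀ x ∈ l, 0 < x) (y : ℕ) (hy : 0 < y) :
    (leftCol l).count y = l.count (y + 1) := by
  induction l with
  | nil => rfl
  | cons a t ih =>
    have ha : 0 < a := hpos a List.mem_cons_self
    have ih' := ih (fun x hx => hpos x (List.mem_cons_of_mem a hx))
    rw [leftCol_cons]
    by_cases h : 0 < a - 1
    · simp only [h, if_true, List.count_cons, ih', beq_iff_eq]
      by_cases h1 : a - 1 = y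
      · rw [if_pos h1, if_pos (by omega : a = y + 1)]
      · rw [if_neg h1, if_neg (by omega : ¬ a = y + 1)]
    · simp only [h, if_false, ih', List.count_cons, beq_iff_eq]
      rw [if_neg (by omega : ¬ a = y + 1)]
      simp

lemma count_zero_leftCol (l : List ℕ) : (leftCol l).count 0 = 0 := by
  apply List.count_eq_zero.mpr
  intro hmem
  have := List.of_mem_filter hmem
  simp at this

lemma mem_leftCol {l : List ℕ} {x : ℕ} (hx : x ∈ leftCol l) :
    0 < x ∧ ∃ y ∈ l, y - 1 = x := by
  have h1 := List.of_mem_filter hx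
  have h2 := List.mem_of_mem_filter hx
  simp only [decide_eq_true_eq] at h1
  simp only [List.mem_map] at h2
  obtain ⟨y, hy, hyx⟩ := h2
  exact ⟨h1, y, hy, hyx⟩

lemma sorted_leftCol {l : List ℕ} (h : l.Pairwise (· ≥ ·)) :
    (leftCol l).Pairwise (· ≥ ·) := by
  apply List.Pairwise.filter
  exact List.Pairwise.map _ (fun a b hab => Nat.sub_le_sub_right hab 1) h

lemma leftCol_OE {l : List ℕ} (hq : Quadrated l) : OE (leftCol l) := by
  obtain ⟨⟨hs, hpos⟩, hev, hcnt⟩ := hq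
  refine ⟨sorted_leftCol hs, ?_, ?_⟩
  · intro x hx
    obtain ⟨hx0, y, hy, hyx⟩ := mem_leftCol hx
    obtain ⟨k, hk⟩ := hev y hy
    refine ⟨k - 1, by omega⟩
  · intro x
    rcases Nat.eq_zero_or_pos x with hx | hx
    · rw [hx, count_zero_leftCol]; exact Even.zero
    · rw [count_leftCol l hpos x hx]; exact hcnt (x + 1)

lemma leftCol_quad {l : List ℕ} (ho : OE l) : Quadrated (leftCol l) := by
  obtain ⟨hs, hodd, hcnt⟩ := ho
  have hpos : ∀ x ∈ l, 0 < x := by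
    intro x hx
    obtain ⟨k, hk⟩ := hodd x hx
    omega
  refine ⟨⟨sorted_leftCol hs, ?_⟩, ?_, ?_⟩
  · intro x hx; exact (mem_leftCol hx).1
  · intro x hx
    obtain ⟨hx0, y, hy, hyx⟩ := mem_leftCol hx
    obtain ⟨k, hk⟩ := hodd y hy
    exact ⟨k, by omega⟩
  · intro x
    rcases Nat.eq_zero_or_pos x with hx | hx
    · rw [hx, count_zero_leftCol]; exact Even.zero
    · rw [count_leftCol l hpos x hx]; exact hcnt (x + 1)

lemma leftCol_ne_nil {l : List ℕ} (hq : Quadrated l) (h : l ≠ []) :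
    leftCol l ≠ [] := by
  obtain ⟨⟨hs, hpos⟩, hev, hcnt⟩ := hq
  cases l with
  | nil => exact absurd rfl h
  | cons a t =>
    have ha : 0 < a := hpos a List.mem_cons_self
    have hae : Even a := hev a List.mem_cons_self
    have ha2 : 2 ≤ a := by obtain ⟨k, hk⟩ := hae; omega
    rw [leftCol_cons]
    have : 0 < a - 1 := by omega
    simp [this]

lemma quad_cons {l : List ℕ} (hq : Quadrated l) (h : l ≠ []) :
    ∃ a t, l = a :: a :: t ∧ Quadrated t := by
  obtain ⟨⟨hs, hpos⟩, hev, hcnt⟩ := hq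
  cases l with
  | nil => exact absurd rfl h
  | cons a rest =>
    have hcnta : 2 ≤ (a :: rest).count a := by
      have h1 : 0 < (a :: rest).count a :=
        List.count_pos_iff.mpr List.mem_cons_self
      obtain ⟨k, hk⟩ := hcnt a
      omega
    have harest : a ∈ rest := by
      have : (a :: rest).count a = rest.count a + 1 := by
        simp [List.count_cons]
      exact List.count_pos_iff.mp (by omega)
    cases rest with
    | nil => simp at harest
    | cons b t =>
      have hscons := List.pairwise_cons.mp hs
      have hscons2 := List.pairwise_cons.mp hscons.2
      have hab : a = b := by
        have h1 : b ≤ a := hscons.1 b List.mem_cons_self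
        rcases List.mem_cons.mp harest with h' | h'
        · omega
        · have := hscons2.1 a h'
          omega
      subst hab
      refine ⟨a, t, rfl, ⟨hscons2.2, ?_⟩, ?_, ?_⟩
      · intro x hx; exact hpos x (by simp [hx])
      · intro x hx; exact hev x (by simp [hx])
      · intro x
        have hx := hcnt x
        rw [Nat.even_iff] at hx ⊢
        simp only [List.count_cons] at hx
        by_cases hxa : x = a
        · subst hxa; simp at hx; omega
        · simp [hxa] at hx; omega

lemma main_ind : ∀ n : ℕ, ∀ l : List ℕ, wt l ≤ n →
    (Quadrated l → SG l = 0) ∧ (OE l → l ≠ [] → SG l ≠ 0) := by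
  intro n
  induction n using Nat.strong_induction_on with
  | _ n ih =>
    intro l hln
    constructor
    · intro hq
      by_cases hnil : l = []
      · subst hnil; rw [SG]; simp
      · obtain ⟨a, t, rfl, hqt⟩ := quad_cons hq hnil
        rw [SG_ne_nil _ hnil]
        have hwl : wt (leftCol (a :: a :: t)) < wt (a :: a :: t) :=
          wt_leftCol_lt _ hnil
        have hL : SG (leftCol (a :: a :: t)) ≠ 0 := by
          refine (ih (wt (leftCol (a :: a :: t))) (by omega) _ le_rfl).2 ?_ ?_
          · exact leftCol_OE hq
          · exact leftCol_ne_nil hq hnil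
        have hT : SG (topRow (a :: a :: t)) ≠ 0 := by
          have htr : topRow (a :: a :: t) = a :: t := rfl
          rw [htr, SG_ne_nil (a :: t) (by simp)]
          have htr2 : topRow (a :: t) = t := rfl
          rw [htr2]
          have hwt : wt t < wt (a :: a :: t) := by
            simp [wt, List.sum_cons]; omega
          have hSGt : SG t = 0 :=
            (ih (wt t) (by omega) t le_rfl).1 hqt
          rw [hSGt]
          exact mex_pair_ne_zero_right _
        exact mex_pair_eq_zero hL hT
    · intro ho hnil
      rw [SG_ne_nil _ hnil]
      have hwl : wt (leftCol l) < wt l := wt_leftCol_lt _ hnil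
      have hL : SG (leftCol l) = 0 :=
        (ih (wt (leftCol l)) (by omega) _ le_rfl).1 (leftCol_quad ho)
      rw [hL]
      exact mex_pair_ne_zero_left _

/-- Every quadrated partition is a P-position in LCTR. -/
theorem SG_quadrated (l : List ℕ) (hl : Quadrated l) : SG l = 0 := by
  exact (main_ind (wt l) l le_rfl).1 hl
end
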